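/- (Universal step bound for VI tensor step) Let x₊ satisfy ⟨G(x₊), y - x₊⟩ + ψ(y) ≥ ψ(x₊) for all y ∈ dom ψ, where G(y) = T^V_{v,p}(y) + M∇d_{p+2}(y - v), and define V_ψ(x₊) = V(x₊) - G(x₊). Assume the Taylor remainder bound ‖V(y) - T^V_{v,p}(y)‖* ≤ (M̂_{p+1}/(p+1)!)‖y - v‖^{p+1} and M > M̂_{p+1}/(p+1)!. Then ⟨V_ψ(x₊), v - x₊⟩ ≥ γ̂_p·‖V_ψ(x₊)‖*^{(p+2)/(p+1)}, where γ̂_p = (M - M̂_{p+1}/(p+1)!)·(M + M̂_{p+1}/(p+1)!)^{-(p+2)/(p+1)}. -/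

import Mathlib

open RealInnerProductSpace Real

theorem stmt_18 {E : Type*} [NormedAddCommGroup E] [InnerProductSpace ℝ E]
    (p : ℕ) (Mhat M : ℝ) (hMhat : 0 ≤ Mhat)
    (hM : Mhat / (Nat.factorial (p+1) : ℝ) < M)
    (v xplus : E) (Vop TV : E → E)
    (hrem : ∀ y : E, ‖Vop y - TV y‖ ≤ Mhat / (Nat.factorial (p+1) : ℝ) * ‖y - v‖ ^ (p+1))
    (Vψ : E)
    (hVψ : Vψ = Vop xplus - TV xplus + (M * ‖v - xplus‖ ^ p) • (v - xplus)) :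
    ⟪Vψ, v - xplus⟫ ≥
      (M - Mhat / (Nat.factorial (p+1) : ℝ)) *
        (M + Mhat / (Nat.factorial (p+1) : ℝ)) ^ (-(((p : ℝ) + 2)/((p : ℝ) + 1))) *
        ‖Vψ‖ ^ (((p : ℝ) + 2)/((p : ℝ) + 1)) := by
  set A : ℝ := Mhat / (Nat.factorial (p+1) : ℝ) with hAdef
  have hA : 0 ≤ A := div_nonneg hMhat (by positivity)
  have haM : 0 < M + A := by linarith
  set q : ℝ := ((p : ℝ) + 2)/((p : ℝ) + 1) with hqdef
  have hq : 0 ≤ q := by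
    apply div_nonneg <;> positivity
  set r : ℝ := ‖v - xplus‖ with hrdef
  have hr0 : 0 ≤ r := norm_nonneg _
  have hrem' : ‖Vop xplus - TV xplus‖ ≤ A * r ^ (p+1) := by
    have := hrem xplus
    rwa [show ‖xplus - v‖ = r by rw [hrdef, norm_sub_rev]] at this
  -- inner product lower bound
  have h1 : ⟪Vψ, v - xplus⟫ ≥ (M - A) * r ^ (p+2) := by
    rw [hVψ, inner_add_left, real_inner_smul_left, real_inner_self_eq_norm_sq, ← hrdef]
    have hcs : ⟪Vop xplus - TV xplus, v - xplus⟫ ≥ -(A * r ^ (p+1) * r) := by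
      have := abs_real_inner_le_norm (Vop xplus - TV xplus) (v - xplus)
      have h2 : ⟪Vop xplus - TV xplus, v - xplus⟫ ≥ -(‖Vop xplus - TV xplus‖ * r) :=
        neg_le_of_abs_le this
      have := mul_le_mul_of_nonneg_right hrem' hr0
      linarith
    have : M * r ^ p * r ^ 2 = M * r ^ (p + 2) := by ring
    rw [this]
    have hpow : A * r ^ (p+1) * r = A * r ^ (p+2) := by ring
    rw [hpow] at hcs
    linarith
  -- norm upper bound
  have h2 : ‖Vψ‖ ≤ (M + A) * r ^ (p+1) := by
    rw [hVψ]
    calc ‖Vop xplus - TV xplus + (M * r ^ p) • (v - xplus)‖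
        ≤ ‖Vop xplus - TV xplus‖ + ‖(M * r ^ p) • (v - xplus)‖ := norm_add_le _ _
      _ ≤ A * r ^ (p+1) + |M * r ^ p| * r := by
          rw [norm_smul, Real.norm_eq_abs, ← hrdef]
          exact add_le_add_left hrem' _
      _ ≤ (M + A) * r ^ (p+1) := by
          have hMpos : 0 < M := lt_of_le_of_lt hA hM
          have : |M * r ^ p| = M * r ^ p := abs_of_nonneg (by positivity)
          rw [this]
          have : M * r ^ p * r = M * r ^ (p+1) := by ring
          rw [this]; ring_nf; linarith
  -- combine
  have hVn : (0:ℝ) ≤ ‖Vψ‖ := norm_nonneg _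
  have hstep : ‖Vψ‖ ^ q ≤ ((M + A) * r ^ (p+1)) ^ q :=
    Real.rpow_le_rpow hVn h2 hq
  have hcalc : ((M + A) * r ^ (p+1)) ^ q = (M + A) ^ q * r ^ (p+2) := by
    rw [Real.mul_rpow (le_of_lt haM) (by positivity)]
    congr 1
    rw [← Real.rpow_natCast r (p+1), ← Real.rpow_mul hr0, ← Real.rpow_natCast r (p+2)]
    congr 1
    have hne : ((p:ℝ) + 1) ≠ 0 := by positivity
    push_cast
    field_simp [hqdef]
    rw [hqdef]
    field_simp
  have haq : (0:ℝ) < (M + A) ^ q := Real.rpow_pos_of_pos haM q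
  have hMA : 0 < M - A := by linarith
  have key : (M - A) * (M + A) ^ (-q) * ‖Vψ‖ ^ q ≤ (M - A) * r ^ (p+2) := by
    rw [Real.rpow_neg (le_of_lt haM)]
    rw [hcalc] at hstep
    calc (M - A) * ((M + A) ^ q)⁻¹ * ‖Vψ‖ ^ q
        ≤ (M - A) * ((M + A) ^ q)⁻¹ * ((M + A) ^ q * r ^ (p+2)) := by
          apply mul_le_mul_of_nonneg_left hstep
          positivity
      _ = (M - A) * r ^ (p+2) := by
          field_simp
  linarith [h1]
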